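/- The symplectic graph Sp(2m, 𝔽₂) contains an independent set of size 2m + 1; consequently α(Sp(2m,𝔽₂)) ≥ 2m+1. -/

import Mathlib

open Finset

/-- The canonical symplectic form `σ(u,v) = uᵀ [[0, Iₘ], [-Iₘ, 0]] v` on `𝔽₂^{2m}`,
with vectors written as pairs in `(𝔽₂^m) × (𝔽₂^m)`. -/
def sympForm (m : ℕ) (u v : (Fin m → ZMod 2) × (Fin m → ZMod 2)) : ZMod 2 :=
  (∑ i, u.1 i * v.2 i) - ∑ i, u.2 i * v.1 i

/-- The symplectic graph `Sp(2m, 𝔽₂)`: vertices are the nonzero vectors of `𝔽₂^{2m}`,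
with distinct vertices adjacent iff the symplectic form vanishes on them. -/
def sympGraph (m : ℕ) :
    SimpleGraph {v : (Fin m → ZMod 2) × (Fin m → ZMod 2) // v ≠ 0} where
  Adj u v := u ≠ v ∧ sympForm m u.1 v.1 = 0
  symm := by
    constructor
    rintro u v ⟨h, hs⟩
    refine ⟨h.symm, ?_⟩
    have h1 : ∀ f g : Fin m → ZMod 2, ∑ i, f i * g i = ∑ i, g i * f i :=
      fun f g => Finset.sum_congr rfl fun i _ => mul_comm _ _
    unfold sympForm at hs ⊢
    rw [h1 v.1.1 u.1.2, h1 v.1.2 u.1.1]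
    linear_combination -hs
  loopless := ⟨fun u h => h.1 rfl⟩

/-- The independence number of a finite simple graph. -/
noncomputable def SimpleGraph.indepNum' {V : Type*} [Fintype V] (G : SimpleGraph V) : ℕ :=
  sSup {n | ∃ s : Finset V, ((s : Set V).Pairwise fun u v => ¬ G.Adj u v) ∧ s.card = n}

def pref (m a : ℕ) : Fin m → ZMod 2 := fun i => if (i : ℕ) < a then 1 else 0

lemma dot_pref (m a b : ℕ) :
    (∑ i : Fin m, pref m a i * pref m b i) = ((min (min a b) m : ℕ) : ZMod 2) := by
  have h1 : ∀ i : Fin m, pref m a i * pref m b i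
      = if (i : ℕ) < min a b then (1 : ZMod 2) else 0 := by
    intro i
    unfold pref
    by_cases ha : (i : ℕ) < a <;> by_cases hb : (i : ℕ) < b <;>
      simp [ha, hb, lt_min_iff]
  rw [Finset.sum_congr rfl fun i _ => h1 i]
  rw [Fin.sum_univ_eq_sum_range (fun i => if i < min a b then (1 : ZMod 2) else 0)]
  rw [Finset.sum_boole]
  have h2 : (Finset.range m).filter (fun i => i < min a b) = Finset.range (min (min a b) m) := by
    ext x
    simp only [Finset.mem_filter, Finset.mem_range, lt_min_iff]
    tauto
  rw [h2]
  simp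

def sympVec (m j : ℕ) : (Fin m → ZMod 2) × (Fin m → ZMod 2) :=
  (pref m ((j + 1) / 2), pref m (j / 2 + 1 - j % 2))

lemma sympVec_ne_zero (m j : ℕ) (hm : 1 ≤ m) : sympVec m j ≠ 0 := by
  intro h
  rcases Nat.even_or_odd j with hj | hj
  · have h2 : (sympVec m j).2 ⟨0, hm⟩ = 0 := by rw [h]; rfl
    have : j % 2 = 0 := Nat.even_iff.mp hj
    simp only [sympVec, pref, this] at h2
    norm_num at h2
  · have h2 : (sympVec m j).1 ⟨0, hm⟩ = 0 := by rw [h]; rfl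
    have : j % 2 = 1 := Nat.odd_iff.mp hj
    simp only [sympVec, pref] at h2
    rw [if_pos (by omega)] at h2
    norm_num at h2

lemma sympForm_sympVec (m j l : ℕ) (hj : j ≤ 2 * m) (hl : l ≤ 2 * m) (hjl : j ≠ l) :
    sympForm m (sympVec m j) (sympVec m l) = 1 := by
  unfold sympForm sympVec
  rw [dot_pref, dot_pref]
  rw [CharTwo.sub_eq_add, ← Nat.cast_add]
  set N := min (min ((j + 1) / 2) (l / 2 + 1 - l % 2)) m
    + min (min (j / 2 + 1 - j % 2) ((l + 1) / 2)) m with hN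
  have hodd : N % 2 = 1 := by omega
  rw [← Nat.mod_add_div N 2, hodd]
  push_cast
  rw [show (2 : ZMod 2) = 0 from rfl]
  ring

lemma sympForm_self (m : ℕ) (v : (Fin m → ZMod 2) × (Fin m → ZMod 2)) :
    sympForm m v v = 0 := by
  unfold sympForm
  rw [Finset.sum_congr rfl fun i _ => mul_comm (v.1 i) (v.2 i)]
  exact sub_self _

/-- `Sp(2m, 𝔽₂)` contains an independent set of size `2m + 1`; consequently
its independence number is at least `2m + 1`. -/
theorem sympGraph_indep_set (m : ℕ) (hm : 1 ≤ m) :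
    (∃ s : Finset {v : (Fin m → ZMod 2) × (Fin m → ZMod 2) // v ≠ 0},
      ((s : Set _).Pairwise fun u v => ¬ (sympGraph m).Adj u v) ∧ s.card = 2 * m + 1) ∧
    2 * m + 1 ≤ (sympGraph m).indepNum' := by
  set f : Fin (2 * m + 1) → {v : (Fin m → ZMod 2) × (Fin m → ZMod 2) // v ≠ 0} :=
    fun j => ⟨sympVec m j, sympVec_ne_zero m j hm⟩ with hf
  have hform : ∀ j l : Fin (2 * m + 1), j ≠ l →
      sympForm m (f j).1 (f l).1 = 1 := by
    intro j l hjl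
    exact sympForm_sympVec m j l (Nat.lt_succ_iff.mp j.isLt) (Nat.lt_succ_iff.mp l.isLt)
      (fun h => hjl (Fin.ext h))
  have hinj : Function.Injective f := by
    intro j l h
    by_contra hne
    have h1 := hform j l hne
    rw [h, sympForm_self] at h1
    exact absurd h1 (by decide)
  have hpair : ((Finset.univ.image f : Finset _) : Set _).Pairwise
      fun u v => ¬ (sympGraph m).Adj u v := by
    intro u hu v hv huv hadj
    simp only [Finset.coe_image, Finset.coe_univ, Set.image_univ, Set.mem_range] at hu hv
    obtain ⟨j, rfl⟩ := hu
    obtain ⟨l, rfl⟩ := hv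
    have hjl : j ≠ l := fun h => huv (by rw [h])
    have := (hadj : f j ≠ f l ∧ sympForm m (f j).1 (f l).1 = 0).2
    rw [hform j l hjl] at this
    exact absurd this (by decide)
  have hcard : (Finset.univ.image f).card = 2 * m + 1 := by
    rw [Finset.card_image_of_injective _ hinj, Finset.card_univ, Fintype.card_fin]
  have hmem : (2 * m + 1) ∈ {n | ∃ s : Finset {v : (Fin m → ZMod 2) × (Fin m → ZMod 2) // v ≠ 0},
      ((s : Set _).Pairwise fun u v => ¬ (sympGraph m).Adj u v) ∧ s.card = n} :=
    ⟨Finset.univ.image f, hpair, hcard⟩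
  refine ⟨⟨Finset.univ.image f, hpair, hcard⟩, ?_⟩
  exact le_csSup ⟨Fintype.card _, fun n hn => by
    obtain ⟨s, _, rfl⟩ := hn; exact Finset.card_le_univ s⟩ hmem
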